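/- The sequence of B-modules 0 → B —φ_B→ B² —ψ_B→ (J/J²) ⊗_A B → 0 is exact, where φ_B(c) = (wc, −zc) and ψ_B(a,b) = (class of ax + by in J/J²) ⊗ 1; i.e., the exact sequence 0 → A → A² → J/J² → 0 (with maps c ↦ (wc,−zc) and (a,b) ↦ class of ax+by) remains exact after tensoring with B over A. -/

import Mathlib

/-!
Setting: `R := ℂ[x,y,z,w]/(xw − yz)`, `J = (x,y) ⊆ R`, `A := R/J ≅ ℂ[z,w]`;
`f ∈ ℂ[z,w] ≅ A` a nonzero element with `f(0,0) = 0` (i.e. `f ∈ (z,w)`), and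
`B := A/(f)` the coordinate ring of the curve `C = {f = 0} ⊂ X` through the node.

STATEMENT 6: the sequence of `B`-modules `0 → B —φ_B→ B² —ψ_B→ (J/J²) ⊗_A B → 0` is exact,
where `φ_B(c) = (wc, −zc)` and `ψ_B(a,b) = (class of ax + by in J/J²) ⊗ 1`; i.e. the exact
sequence `0 → A → A² → J/J² → 0` remains exact after tensoring with `B` over `A`.
(The base change `(J/J²) ⊗_A B` is realized as `B ⊗[A] J/J²`, and
`(class of ax+by) ⊗ 1 = a ⊗ x̄ + b ⊗ ȳ` for `a, b ∈ B`.)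
-/

open MvPolynomial TensorProduct

set_option synthInstance.maxHeartbeats 1000000
set_option maxHeartbeats 1000000

noncomputable section

abbrev Pring : Type := MvPolynomial (Fin 4) ℂ

abbrev Rring : Type := Pring ⧸ Ideal.span {(X 0 * X 3 - X 1 * X 2 : Pring)}

def xR : Rring := Ideal.Quotient.mk _ (X 0)
def yR : Rring := Ideal.Quotient.mk _ (X 1)
def zR : Rring := Ideal.Quotient.mk _ (X 2)
def wR : Rring := Ideal.Quotient.mk _ (X 3)

def Jid : Ideal Rring := Ideal.span {xR, yR}

abbrev Aring : Type := Rring ⧸ Jid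

def zA : Aring := Ideal.Quotient.mk _ zR
def wA : Aring := Ideal.Quotient.mk _ wR

def xbar : Jid.Cotangent := Jid.toCotangent ⟨xR, Ideal.subset_span (Set.mem_insert _ _)⟩

def ybar : Jid.Cotangent := Jid.toCotangent ⟨yR, Ideal.subset_span (Set.mem_insert_of_mem _ rfl)⟩

instance Aring_isTwoSided (I : Ideal Aring) : I.IsTwoSided :=
  ⟨fun b ha => by have h := I.mul_mem_left b ha; rwa [mul_comm b _] at h⟩

/-- `B = A/(f)`, the coordinate ring of the curve `C`. -/
abbrev Bring (f : Aring) : Type := Aring ⧸ Ideal.span {f}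

def zB (f : Aring) : Bring f := Ideal.Quotient.mk _ zA
def wB (f : Aring) : Bring f := Ideal.Quotient.mk _ wA

abbrev Q2 : Type := MvPolynomial (Fin 2) ℂ
abbrev Irel : Ideal Pring := Ideal.span {(X 0 * X 3 - X 1 * X 2 : Pring)}
abbrev KXY : Ideal Pring := Ideal.span {(X 0 : Pring), X 1}


lemma prime_X_mv' {n : ℕ} (i : Fin (n+1)) : Prime (X i : MvPolynomial (Fin (n+1)) ℂ) := by
  let e : MvPolynomial (Fin (n+1)) ℂ ≃* Polynomial (MvPolynomial (Fin n) ℂ) :=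
    ((renameEquiv ℂ (Equiv.swap i 0)).trans (finSuccEquiv ℂ n)).toRingEquiv.toMulEquiv
  rw [← MulEquiv.prime_iff e]
  have : e (X i) = Polynomial.X := by
    show (finSuccEquiv ℂ n) (rename (Equiv.swap i 0) (X i)) = _
    rw [rename_X, Equiv.swap_apply_left, finSuccEquiv_X_zero]
  rw [this]; exact Polynomial.prime_X


lemma koszulP (r s : Pring) (h : r * X 0 + s * X 1 = 0) :
    ∃ p : Pring, r = p * X 1 ∧ s = -(p * X 0) := by
  have h1 : (X 1 : Pring) ∣ r * X 0 := ⟨-s, by linear_combination h⟩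
  rcases (prime_X_mv' (1 : Fin 4)).2.2 _ _ h1 with h2 | h2
  · obtain ⟨p, hp⟩ := h2
    refine ⟨p, by rw [hp]; ring, ?_⟩
    have h3 : (X 1 : Pring) * (p * X 0 + s) = 0 := by
      rw [hp] at h; linear_combination h
    rcases mul_eq_zero.mp h3 with h4 | h4
    · exact absurd h4 (MvPolynomial.X_ne_zero 1)
    · linear_combination h4
  · rw [MvPolynomial.X_dvd_X] at h2
    exact absurd h2 (by decide)

lemma jid_eq_map : Jid = KXY.map (Ideal.Quotient.mk Irel) := by
  rw [Jid, Ideal.map_span, Set.image_insert_eq, Set.image_singleton]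
  rfl

lemma sup_eq : Irel ⊔ KXY = KXY := by
  refine sup_eq_right.mpr ?_
  rw [Ideal.span_le, Set.singleton_subset_iff]
  exact Ideal.mem_span_pair.mpr ⟨X 3, -(X 2), by ring⟩

def phi0 : Pring →ₐ[ℂ] Q2 := aeval ![0, 0, X 0, X 1]

lemma phi0_vanish : ∀ a ∈ KXY, phi0 a = 0 := by
  have h : KXY ≤ RingHom.ker phi0.toRingHom := by
    rw [Ideal.span_le]
    rintro b (rfl | rfl) <;> simp [RingHom.mem_ker, phi0]
  exact fun a ha => h ha

def phiq : Pring ⧸ KXY →ₐ[ℂ] Q2 := Ideal.Quotient.liftₐ KXY phi0 phi0_vanish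

def psiq : Q2 →ₐ[ℂ] Pring ⧸ KXY :=
  aeval ![Ideal.Quotient.mk KXY (X 2), Ideal.Quotient.mk KXY (X 3)]

def e4 : (Pring ⧸ KXY) ≃ₐ[ℂ] Q2 := by
  refine AlgEquiv.ofAlgHom phiq psiq ?_ ?_
  · apply MvPolynomial.algHom_ext
    intro i
    fin_cases i <;>
      simp [psiq, phiq, Ideal.Quotient.liftₐ_apply, phi0] <;>
      erw [Ideal.Quotient.lift_mk] <;> simp
  · apply Ideal.Quotient.algHom_ext
    apply MvPolynomial.algHom_ext
    intro i
    fin_cases i <;>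
      simp [psiq, phiq, Ideal.Quotient.liftₐ_apply, phi0, Ideal.Quotient.eq_zero_iff_mem,
        Ideal.subset_span, Set.mem_insert_iff] <;>
      erw [Ideal.Quotient.lift_mk] <;> simp <;>
      (symm; rw [Ideal.Quotient.eq_zero_iff_mem]; exact Ideal.subset_span (by simp))

def epsA : Aring ≃+* Q2 :=
  (Ideal.quotEquivOfEq jid_eq_map).trans
    ((DoubleQuot.quotQuotEquivQuotSup Irel KXY).trans
      ((Ideal.quotEquivOfEq sup_eq).trans e4.toRingEquiv))

lemma epsA_mk (p : Pring) :
    epsA (Ideal.Quotient.mk Jid (Ideal.Quotient.mk Irel p)) = phi0 p := by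
  simp [epsA, Ideal.quotEquivOfEq_mk, e4, phiq]
  rfl

lemma epsA_zA : epsA zA = X 0 := by
  rw [zA, zR, epsA_mk]; simp [phi0]

lemma epsA_wA : epsA wA = X 1 := by
  rw [wA, wR, epsA_mk]; simp [phi0]

-- ===== Cotangent part =====

lemma xR_mem : xR ∈ Jid := Ideal.subset_span (Set.mem_insert _ _)
lemma yR_mem : yR ∈ Jid := Ideal.subset_span (Set.mem_insert_of_mem _ rfl)

lemma mkJ_smul (r : Rring) (m : Jid) :
    (Ideal.Quotient.mk Jid r) • (Jid.toCotangent m) = Jid.toCotangent (r • m) := by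
  show r • (Jid.toCotangent m) = _
  rw [map_smul]

def alphaMap : (Aring × Aring) →ₗ[Aring] Jid.Cotangent :=
  LinearMap.coprod (LinearMap.toSpanSingleton Aring _ xbar)
    (LinearMap.toSpanSingleton Aring _ ybar)

lemma alphaMap_apply (a b : Aring) :
    alphaMap (a, b) = a • xbar + b • ybar := rfl

lemma alphaMap_mk (r s : Rring) :
    alphaMap (Ideal.Quotient.mk Jid r, Ideal.Quotient.mk Jid s) =
      Jid.toCotangent ⟨r * xR + s * yR,
        add_mem (Ideal.mul_mem_left _ _ xR_mem) (Ideal.mul_mem_left _ _ yR_mem)⟩ := by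
  rw [alphaMap_apply, xbar, ybar, mkJ_smul, mkJ_smul, ← map_add]
  rfl

lemma alphaMap_surj : Function.Surjective alphaMap := by
  intro t
  obtain ⟨⟨m, hm⟩, rfl⟩ := Jid.toCotangent_surjective t
  have hm' : m ∈ Ideal.span {xR, yR} := hm
  obtain ⟨r, s, hrs⟩ := Ideal.mem_span_pair.mp hm'
  exact ⟨(Ideal.Quotient.mk Jid r, Ideal.Quotient.mk Jid s), by
    rw [alphaMap_mk]; exact congrArg _ (Subtype.ext hrs)⟩

lemma relation_zero : wR * xR + (-zR) * yR = 0 := by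
  show Ideal.Quotient.mk _ (X 3) * Ideal.Quotient.mk _ (X 0) +
    (-(Ideal.Quotient.mk _ (X 2))) * Ideal.Quotient.mk _ (X 1) = 0
  rw [← map_neg, ← map_mul, ← map_mul, ← map_add, Ideal.Quotient.eq_zero_iff_mem]
  exact Ideal.mem_span_singleton.mpr ⟨1, by ring⟩

lemma alphaMap_wz : alphaMap (wA, -zA) = 0 := by
  have : (-zA) = Ideal.Quotient.mk Jid (-zR) := by rw [map_neg]; rfl
  rw [wA, this, alphaMap_mk]
  rw [Ideal.toCotangent_eq_zero]
  show wR * xR + -zR * yR ∈ Jid ^ 2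
  have h0 : wR * xR + -zR * yR = 0 := relation_zero
  rw [h0]
  exact zero_mem _

-- members of Jid^2 decompose
lemma sq_decomp (m : Rring) (hm : m ∈ Jid ^ 2) :
    ∃ u v : Rring, u ∈ Jid ∧ v ∈ Jid ∧ m = u * xR + v * yR := by
  rw [pow_two] at hm
  refine Submodule.mul_induction_on hm ?_ ?_
  · intro p hp q hq
    obtain ⟨r, s, hrs⟩ := Ideal.mem_span_pair.mp (by exact hp : p ∈ Ideal.span {xR, yR})
    exact ⟨r * q, s * q, Ideal.mul_mem_left _ _ hq, Ideal.mul_mem_left _ _ hq,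
      by rw [← hrs]; ring⟩
  · rintro p q ⟨u₁, v₁, hu₁, hv₁, rfl⟩ ⟨u₂, v₂, hu₂, hv₂, rfl⟩
    exact ⟨u₁ + u₂, v₁ + v₂, add_mem hu₁ hu₂, add_mem hv₁ hv₂, by ring⟩

def Ksub : Submodule Aring (Aring × Aring) := Submodule.span Aring {(wA, -zA)}

lemma alphaMap_ker : LinearMap.ker alphaMap = Ksub := by
  apply le_antisymm
  · rintro ⟨a, b⟩ hab
    obtain ⟨r, rfl⟩ := Ideal.Quotient.mk_surjective a
    obtain ⟨s, rfl⟩ := Ideal.Quotient.mk_surjective b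
    have hab' : Ideal.Quotient.mk Jid r • xbar + Ideal.Quotient.mk Jid s • ybar = 0 :=
      hab
    rw [← alphaMap_apply, alphaMap_mk, Ideal.toCotangent_eq_zero] at hab'
    obtain ⟨u, v, hu, hv, huv⟩ := sq_decomp _ hab'
    -- lift the relation to Pring
    obtain ⟨r₁, hr₁⟩ := Ideal.Quotient.mk_surjective (r - u)
    obtain ⟨s₁, hs₁⟩ := Ideal.Quotient.mk_surjective (s - v)
    have hrel : Ideal.Quotient.mk (Ideal.span {(X 0 * X 3 - X 1 * X 2 : Pring)})
        (r₁ * X 0 + s₁ * X 1) = 0 := by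
      rw [map_add, map_mul, map_mul, hr₁, hs₁]
      show (r - u) * xR + (s - v) * yR = 0
      have : u * xR + v * yR = r * xR + s * yR := huv.symm
      linear_combination -this
    rw [Ideal.Quotient.eq_zero_iff_mem, Ideal.mem_span_singleton] at hrel
    obtain ⟨t, ht⟩ := hrel
    have hk : (r₁ - t * X 3) * X 0 + (s₁ + t * X 2) * X 1 = 0 := by
      linear_combination ht
    obtain ⟨p, hp1, hp2⟩ := koszulP _ _ hk
    have hr₁' : r₁ = t * X 3 + p * X 1 := by linear_combination hp1
    have hs₁' : s₁ = -(t * X 2) - p * X 0 := by linear_combination hp2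
    -- now compute a and b
    set mkP := Ideal.Quotient.mk (Ideal.span {(X 0 * X 3 - X 1 * X 2 : Pring)})
    set mkJ := Ideal.Quotient.mk Jid
    have hyR : mkJ yR = 0 := Ideal.Quotient.eq_zero_iff_mem.mpr yR_mem
    have hxR : mkJ xR = 0 := Ideal.Quotient.eq_zero_iff_mem.mpr xR_mem
    have hu0 : mkJ u = 0 := Ideal.Quotient.eq_zero_iff_mem.mpr hu
    have hv0 : mkJ v = 0 := Ideal.Quotient.eq_zero_iff_mem.mpr hv
    have hra : mkJ r = mkJ (mkP t) * wA := by
      have : r = u + mkP r₁ := by rw [hr₁]; ring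
      rw [this, map_add, hu0, zero_add, hr₁']
      simp only [map_add, map_mul]
      show mkJ (mkP t) * mkJ wR + mkJ (mkP p) * mkJ yR = mkJ (mkP t) * wA
      rw [hyR, show mkJ wR = wA from rfl]; ring
    have hsb : mkJ s = mkJ (mkP t) * (-zA) := by
      have : s = v + mkP s₁ := by rw [hs₁]; ring
      rw [this, map_add, hv0, zero_add, hs₁']
      simp only [map_sub, map_neg, map_add, map_mul]
      show -(mkJ (mkP t) * mkJ zR) - mkJ (mkP p) * mkJ xR = mkJ (mkP t) * (-zA)
      rw [hxR, show mkJ zR = zA from rfl]; ring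
    refine Submodule.mem_span_singleton.mpr ⟨mkJ (mkP t), ?_⟩
    have : mkJ (mkP t) • ((wA, -zA) : Aring × Aring)
        = (mkJ (mkP t) * wA, mkJ (mkP t) * (-zA)) := rfl
    rw [this, ← hra, ← hsb]
  · rw [Ksub, Submodule.span_le, Set.singleton_subset_iff]
    exact alphaMap_wz

lemma ufd_key (g : Q2) : ∀ c : Q2, g ∣ X 0 * c → g ∣ X 1 * c → g ∣ c := by
  induction g using UniqueFactorizationMonoid.induction_on_prime with
  | h₁ =>
    intro c h0 _
    rcases zero_dvd_iff.mp h0 |> mul_eq_zero.mp with h | h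
    · exact absurd h (MvPolynomial.X_ne_zero 0)
    · rw [h]
  | h₂ x hx =>
    intro c _ _
    exact hx.dvd
  | h₃ a p ha hp IH =>
    intro c h0 h1
    by_cases hpc : p ∣ c
    · obtain ⟨c', rfl⟩ := hpc
      have h0' : a ∣ X 0 * c' := by
        have := (mul_dvd_mul_iff_left hp.ne_zero).mp
          (show p * a ∣ p * (X 0 * c') by rw [show p * (X 0 * c') = X 0 * (p * c') by ring]; exact h0)
        exact this
      have h1' : a ∣ X 1 * c' := by
        have := (mul_dvd_mul_iff_left hp.ne_zero).mp
          (show p * a ∣ p * (X 1 * c') by rw [show p * (X 1 * c') = X 1 * (p * c') by ring]; exact h1)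
        exact this
      exact mul_dvd_mul_left p (IH c' h0' h1')
    · exfalso
      have hp0 : p ∣ X 0 := by
        rcases hp.2.2 _ _ (dvd_trans (dvd_mul_right p a) h0) with h | h
        · exact h
        · exact absurd h hpc
      have hp1 : p ∣ X 1 := by
        rcases hp.2.2 _ _ (dvd_trans (dvd_mul_right p a) h1) with h | h
        · exact h
        · exact absurd h hpc
      have : (X 0 : Q2) ∣ X 1 :=
        dvd_trans ((hp.associated_of_dvd (prime_X_mv' 0) hp0).symm.dvd) hp1
      rw [MvPolynomial.X_dvd_X] at this
      exact absurd this (by decide)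

-- ===== glue =====
@[reducible] def instBringCR (f : Aring) : CommRing (Bring f) :=
  { (Ideal.Quotient.ring (Ideal.span {f}) : Ring (Bring f)) with
    mul_comm := by
      intro a b
      obtain ⟨a, rfl⟩ := Ideal.Quotient.mk_surjective a
      obtain ⟨b, rfl⟩ := Ideal.Quotient.mk_surjective b
      exact ((map_mul _ a b).symm.trans (congrArg _ (mul_comm a b))).trans (map_mul _ b a) }

section glue
variable (f : Aring)
attribute [local instance] instBringCR

def KB : Submodule (Bring f) (Bring f × Bring f) :=
  Submodule.span (Bring f) {(wB f, -(zB f))}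

abbrev Ncok := (Bring f × Bring f) ⧸ KB f

def gammaMap : (Aring × Aring) →ₗ[Aring] Ncok f :=
  (((KB f).mkQ).restrictScalars Aring) ∘ₗ
    ((Algebra.linearMap Aring (Bring f)).prodMap (Algebra.linearMap Aring (Bring f)))

lemma gammaMap_apply (a b : Aring) :
    gammaMap f (a, b) = (KB f).mkQ (Ideal.Quotient.mk _ a, Ideal.Quotient.mk _ b) := rfl

lemma ker_le_gamma : LinearMap.ker alphaMap ≤ LinearMap.ker (gammaMap f) := by
  rw [alphaMap_ker, Ksub, Submodule.span_le, Set.singleton_subset_iff]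
  simp only [SetLike.mem_coe, LinearMap.mem_ker]
  have h1 : gammaMap f (wA, -zA) = (KB f).mkQ (wB f, -(zB f)) := by
    rw [gammaMap_apply]
    show (KB f).mkQ ((Ideal.Quotient.mk _ wA : Bring f), (Ideal.Quotient.mk _ (-zA) : Bring f)) = _
    rw [map_neg]
    rfl
  rw [h1, Submodule.mkQ_apply, Submodule.Quotient.mk_eq_zero]
  exact Submodule.subset_span rfl

def betaMap : Jid.Cotangent →ₗ[Aring] Ncok f :=
  ((LinearMap.ker alphaMap).liftQ (gammaMap f) (ker_le_gamma f)) ∘ₗ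
    ((alphaMap.quotKerEquivOfSurjective alphaMap_surj).symm :
      Jid.Cotangent →ₗ[Aring] (Aring × Aring) ⧸ LinearMap.ker alphaMap)

lemma betaMap_alpha (v : Aring × Aring) : betaMap f (alphaMap v) = gammaMap f v := by
  have h1 : alphaMap.quotKerEquivOfSurjective alphaMap_surj (Submodule.Quotient.mk v)
      = alphaMap v := rfl
  rw [betaMap]
  simp only [LinearMap.comp_apply, LinearEquiv.coe_coe]
  rw [← h1, LinearEquiv.symm_apply_apply, Submodule.liftQ_apply]

lemma betaMap_x : betaMap f xbar = (KB f).mkQ (1, 0) := by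
  have h : alphaMap (1, 0) = xbar := by
    rw [alphaMap_apply]
    exact (congrArg₂ (· + · : Jid.Cotangent → Jid.Cotangent → Jid.Cotangent) (one_smul Aring xbar) (map_zero (LinearMap.toSpanSingleton Aring _ ybar))).trans (add_zero _)
  rw [← h, betaMap_alpha, gammaMap_apply]
  congr 1

lemma betaMap_y : betaMap f ybar = (KB f).mkQ (0, 1) := by
  have h : alphaMap (0, 1) = ybar := by
    rw [alphaMap_apply]
    exact (congrArg₂ (· + · : Jid.Cotangent → Jid.Cotangent → Jid.Cotangent) (map_zero (LinearMap.toSpanSingleton Aring _ xbar)) (one_smul Aring ybar)).trans (zero_add _)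
  rw [← h, betaMap_alpha, gammaMap_apply]
  congr 1

def gMap : (Bring f ⊗[Aring] Jid.Cotangent) →ₗ[Bring f] Ncok f :=
  (betaMap f).liftBaseChange (Bring f)

lemma gMap_psi (a b : Bring f) :
    gMap f (a ⊗ₜ[Aring] xbar + b ⊗ₜ[Aring] ybar) = (KB f).mkQ (a, b) := by
  rw [map_add, gMap, LinearMap.liftBaseChange_tmul, LinearMap.liftBaseChange_tmul,
    betaMap_x, betaMap_y, ← map_smul, ← map_smul, ← map_add]
  congr 1
  show (a • ((1 : Bring f), (0 : Bring f)) + b • ((0 : Bring f), (1 : Bring f))) = (a, b)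
  simp [Prod.smul_mk, smul_eq_mul]

lemma tensor_key (a b : Bring f) (h : a ⊗ₜ[Aring] xbar + b ⊗ₜ[Aring] ybar = 0) :
    (a, b) ∈ KB f := by
  have := gMap_psi f a b
  rw [h, map_zero] at this
  rw [← Submodule.Quotient.mk_eq_zero, ← Submodule.mkQ_apply]
  exact this.symm

end glue


theorem stmt_6 (f : Aring) (hf : f ≠ 0) (hf0 : f ∈ Ideal.span {zA, wA})
    (φB : Bring f →ₗ[Bring f] Bring f × Bring f)
    (ψB : Bring f × Bring f →ₗ[Bring f] (Bring f ⊗[Aring] Jid.Cotangent))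
    (hφ : ∀ c : Bring f, φB c = (wB f * c, -(zB f * c)))
    (hψ : ∀ a b : Bring f, ψB (a, b) = a ⊗ₜ[Aring] xbar + b ⊗ₜ[Aring] ybar) :
    Function.Injective φB ∧
    LinearMap.ker ψB = LinearMap.range φB ∧
    Function.Surjective ψB := by
  set B := Bring f
  -- Injectivity
  have hinj : Function.Injective φB := by
    rw [injective_iff_map_eq_zero]
    intro c hc
    rw [hφ] at hc
    have hw : wB f * c = 0 := congrArg Prod.fst hc
    have hz : zB f * c = 0 := by
      have := congrArg Prod.snd hc
      simpa using this
    obtain ⟨c', rfl⟩ := Ideal.Quotient.mk_surjective c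
    have hwd : f ∣ wA * c' := by
      exact (Ideal.mem_span_singleton (α := Aring)).mp
        (Ideal.Quotient.eq_zero_iff_mem.mp ((map_mul (Ideal.Quotient.mk (Ideal.span {f})) wA c').trans hw))
    have hzd : f ∣ zA * c' := by
      exact (Ideal.mem_span_singleton (α := Aring)).mp
        (Ideal.Quotient.eq_zero_iff_mem.mp ((map_mul (Ideal.Quotient.mk (Ideal.span {f})) zA c').trans hz))
    have h1 : epsA f ∣ X 0 * epsA c' := by
      have := map_dvd epsA hzd
      rwa [map_mul, epsA_zA] at this
    have h2 : epsA f ∣ X 1 * epsA c' := by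
      have := map_dvd epsA hwd
      rwa [map_mul, epsA_wA] at this
    have h3 : epsA f ∣ epsA c' := ufd_key _ _ h1 h2
    have h4 : f ∣ c' := by
      have := map_dvd epsA.symm h3
      rwa [RingEquiv.symm_apply_apply, RingEquiv.symm_apply_apply] at this
    rw [Ideal.Quotient.eq_zero_iff_mem]
    exact (Ideal.mem_span_singleton (α := Aring)).mpr h4
  refine ⟨hinj, ?_, ?_⟩
  · -- exactness at the middle
    have hrange : LinearMap.range φB = KB f := by
      apply le_antisymm
      · rintro v ⟨c, rfl⟩
        rw [hφ]
        have h1 : wB f * c = c * wB f := by letI := instBringCR f; exact mul_comm _ _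
        have h2 : -(zB f * c) = c * -(zB f) := by letI := instBringCR f; ring
        have hsm : (wB f * c, -(zB f * c)) = c • (wB f, -(zB f)) := by
          rw [Prod.smul_mk, smul_eq_mul, smul_eq_mul, h1, h2]
        rw [hsm]
        exact Submodule.smul_mem _ _ (Submodule.subset_span rfl)
      · rw [KB, Submodule.span_le, Set.singleton_subset_iff]
        exact ⟨1, by rw [hφ]; simp⟩
    apply le_antisymm
    · rintro ⟨a, b⟩ hv
      rw [LinearMap.mem_ker, hψ] at hv
      rw [hrange]
      exact tensor_key f a b hv
    · -- range ⊆ ker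
      rintro v ⟨c, rfl⟩
      rw [LinearMap.mem_ker, hφ, hψ]
      have h1 : wB f * c = wA • c := by
        exact (Algebra.smul_def wA c).symm
      have h2 : -(zB f * c) = (-zA) • c := by
        calc -(zB f * c) = -(zA • c) := congrArg Neg.neg (Algebra.smul_def zA c).symm
          _ = (-zA) • c := (neg_smul zA c).symm
      rw [h1, h2, show (wA • c) ⊗ₜ[Aring] xbar = c ⊗ₜ[Aring] (wA • xbar) from (smul_tmul' wA c xbar).symm.trans (tmul_smul wA c xbar).symm,
        show ((-zA) • c) ⊗ₜ[Aring] ybar = c ⊗ₜ[Aring] ((-zA) • ybar) from (smul_tmul' (-zA) c ybar).symm.trans (tmul_smul (-zA) c ybar).symm,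
        ← tmul_add]
      have : wA • xbar + (-zA) • ybar = 0 := by
        rw [← alphaMap_apply]; exact alphaMap_wz
      rw [this, tmul_zero]
  · -- surjectivity
    have : LinearMap.range ψB = ⊤ := by
      rw [eq_top_iff]
      rintro t -
      induction t using TensorProduct.induction_on with
      | zero => exact zero_mem _
      | tmul b m =>
        obtain ⟨⟨a₁, a₂⟩, ha⟩ := alphaMap_surj m
        rw [← ha, alphaMap_apply]
        have : b ⊗ₜ[Aring] (a₁ • xbar + a₂ • ybar)
            = ψB (a₁ • b, a₂ • b) := by
          rw [hψ, tmul_add, tmul_smul, tmul_smul, smul_tmul', smul_tmul']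
        rw [this]
        exact LinearMap.mem_range_self _ _
      | add s t hs ht => exact add_mem hs ht
    exact LinearMap.range_eq_top.mp this
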